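/- For every m ∈ ℕ, the ℂ-vector space H_m = {P ∈ Pol : P is homogeneous of degree m and Δ P = 0} of harmonic m-homogeneous polynomials has dimension (m+1)(m+2)²(m+3)/12. -/

import Mathlib

open MvPolynomial

/-- The six index pairs `(a,b)` with `a < b`: the variables `z^{ab}`. -/
abbrev Idx : Type := {p : Fin 4 × Fin 4 // p.1 < p.2}

/-- `Pol = ℂ[z^{12}, z^{13}, z^{14}, z^{23}, z^{24}, z^{34}]`. -/
abbrev Pol : Type := MvPolynomial Idx ℂ

/-- The generic antisymmetric matrix of variables: `Z a b = z^{ab}`,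
extended by `z^{ba} = -z^{ab}` and `z^{aa} = 0`. -/
noncomputable def Z (a b : Fin 4) : Pol :=
  if h : a < b then X ⟨(a, b), h⟩
  else if h' : b < a then -X ⟨(b, a), h'⟩
  else 0

/-- `eps a b c d` is the sign of `(a,b,c,d)` as a permutation of `(0,1,2,3)`,
and `0` if two indices coincide (via the Vandermonde product formula). -/
noncomputable def eps (a b c d : Fin 4) : ℂ :=
  ((((b.val : ℤ) - a.val) * ((c.val : ℤ) - a.val) * ((d.val : ℤ) - a.val) *
      ((c.val : ℤ) - b.val) * ((d.val : ℤ) - b.val) * ((d.val : ℤ) - c.val) : ℤ) : ℂ) / 12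

/-- The lowered variables `z_{ab} = (1/2) ∑_{c,d} ε_{abcd} z^{cd}`. -/
noncomputable def Zlow (a b : Fin 4) : Pol :=
  (1 / 2 : ℂ) • ∑ c, ∑ d, eps a b c d • Z c d

/-- The partial derivative `∂_{ab}` with respect to `z^{ab}` (for `a < b`),
extended by `∂_{ba} = -∂_{ab}` and `∂_{aa} = 0`. -/
noncomputable def D (a b : Fin 4) : Pol →ₗ[ℂ] Pol :=
  if h : a < b then (pderiv ⟨(a, b), h⟩).toLinearMap
  else if h' : b < a then -(pderiv ⟨(b, a), h'⟩).toLinearMap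
  else 0

/-- The raised derivative `∂^{ab} = (1/2) ∑_{c,d} ε^{abcd} ∂_{cd}`. -/
noncomputable def Dup (a b : Fin 4) : Pol →ₗ[ℂ] Pol :=
  (1 / 2 : ℂ) • ∑ c, ∑ d, eps a b c d • D c d

/-- The Laplacian `Δ = 2(∂₁₂∂₃₄ − ∂₁₃∂₂₄ + ∂₁₄∂₂₃)`. -/
noncomputable def Lap : Pol →ₗ[ℂ] Pol :=
  (2 : ℂ) • (D 0 1 ∘ₗ D 2 3 - D 0 2 ∘ₗ D 1 3 + D 0 3 ∘ₗ D 1 2)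

/-- The squared radius `r² = 2(z¹²z³⁴ − z¹³z²⁴ + z¹⁴z²³)`. -/
noncomputable def r2 : Pol :=
  (2 : ℂ) • (Z 0 1 * Z 2 3 - Z 0 2 * Z 1 3 + Z 0 3 * Z 1 2)

/-- The space `H_m` of harmonic `m`-homogeneous polynomials in `Pol`. -/
noncomputable def Hm (m : ℕ) : Submodule ℂ Pol :=
  homogeneousSubmodule Idx ℂ m ⊓ LinearMap.ker Lap

set_option linter.dupNamespace false

namespace HmAux

noncomputable def fac (d : Idx →₀ ℕ) : ℂ := ∏ i : Idx, (Nat.factorial (d i) : ℂ)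

lemma fac_ne_zero (d : Idx →₀ ℕ) : fac d ≠ 0 := by
  refine Finset.prod_ne_zero_iff.mpr fun i _ => ?_
  exact_mod_cast (Nat.factorial_ne_zero _)

noncomputable def BF (P Q : Pol) : ℂ := ∑ d ∈ P.support, fac d * coeff d P * coeff d Q

lemma BF_eq_sum {P : Pol} {s : Finset (Idx →₀ ℕ)} (h : P.support ⊆ s) (Q : Pol) :
    BF P Q = ∑ d ∈ s, fac d * coeff d P * coeff d Q := by
  refine Finset.sum_subset h fun d _ hd => ?_
  rw [notMem_support_iff.mp hd]; ring

lemma BF_add_left (P P' Q : Pol) : BF (P + P') Q = BF P Q + BF P' Q := by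
  classical
  rw [BF_eq_sum (s := P.support ∪ P'.support) support_add Q,
      BF_eq_sum (s := P.support ∪ P'.support) Finset.subset_union_left Q,
      BF_eq_sum (s := P.support ∪ P'.support) Finset.subset_union_right Q,
      ← Finset.sum_add_distrib]
  exact Finset.sum_congr rfl fun d _ => by rw [coeff_add]; ring

lemma BF_smul_left (c : ℂ) (P Q : Pol) : BF (c • P) Q = c * BF P Q := by
  rw [BF_eq_sum (s := P.support) support_smul Q, BF, Finset.mul_sum]
  exact Finset.sum_congr rfl fun d _ => by rw [coeff_smul]; simp; ring

lemma BF_neg_left (P Q : Pol) : BF (-P) Q = -BF P Q := by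
  have := BF_smul_left (-1) P Q
  simpa using this

lemma BF_sub_left (P P' Q : Pol) : BF (P - P') Q = BF P Q - BF P' Q := by
  rw [sub_eq_add_neg, BF_add_left, BF_neg_left]; ring

lemma BF_add_right (P Q Q' : Pol) : BF P (Q + Q') = BF P Q + BF P Q' := by
  rw [BF, BF, BF, ← Finset.sum_add_distrib]
  exact Finset.sum_congr rfl fun d _ => by rw [coeff_add]; ring

lemma BF_smul_right (c : ℂ) (P Q : Pol) : BF P (c • Q) = c * BF P Q := by
  rw [BF, BF, Finset.mul_sum]
  exact Finset.sum_congr rfl fun d _ => by rw [coeff_smul]; simp; ring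

lemma BF_sub_right (P Q Q' : Pol) : BF P (Q - Q') = BF P Q - BF P Q' := by
  have h := BF_smul_right (-1) P Q'
  rw [sub_eq_add_neg, BF_add_right]
  simp at h
  rw [h]; ring

lemma BF_symm (P Q : Pol) : BF P Q = BF Q P := by
  classical
  rw [BF_eq_sum (s := P.support ∪ Q.support) Finset.subset_union_left Q,
      BF_eq_sum (s := P.support ∪ Q.support) Finset.subset_union_right P]
  exact Finset.sum_congr rfl fun d _ => by ring

lemma BF_monomial_left (d : Idx →₀ ℕ) (a : ℂ) (Q : Pol) :
    BF (monomial d a) Q = fac d * a * coeff d Q := by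
  classical
  rw [BF_eq_sum (s := {d}) (by rw [support_monomial]; split <;> simp) Q,
      Finset.sum_singleton, coeff_monomial, if_pos rfl]

lemma fac_single_add (i : Idx) (d : Idx →₀ ℕ) :
    fac (Finsupp.single i 1 + d) = ((d i : ℂ) + 1) * fac d := by
  classical
  have h1 : ∀ j ∈ Finset.univ.erase i,
      ((((Finsupp.single i 1 + d : Idx →₀ ℕ)) j).factorial : ℂ) = ((d j).factorial : ℂ) := by
    intro j hj
    rw [Finsupp.add_apply, Finsupp.single_apply,
      if_neg (fun h => (Finset.mem_erase.mp hj).1 h.symm), zero_add]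
  have h2 : (Finsupp.single i 1 + d : Idx →₀ ℕ) i = d i + 1 := by
    rw [Finsupp.add_apply, Finsupp.single_apply, if_pos rfl]; omega
  rw [fac, fac, ← Finset.prod_erase_mul _ _ (Finset.mem_univ i),
      ← Finset.prod_erase_mul _ _ (Finset.mem_univ i),
      Finset.prod_congr rfl h1, h2, Nat.factorial_succ]
  push_cast; ring

lemma coeff_pderiv (i : Idx) (d : Idx →₀ ℕ) (Q : Pol) :
    coeff d (pderiv i Q) = ((d i : ℂ) + 1) * coeff (d + Finsupp.single i 1) Q := by
  classical
  induction Q using MvPolynomial.induction_on' with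
  | add p q hp hq => rw [map_add, coeff_add, coeff_add, hp, hq]; ring
  | monomial s a =>
    rw [pderiv_monomial, coeff_monomial, coeff_monomial]
    by_cases hs : s = d + Finsupp.single i 1
    · subst hs
      have h1 : d + Finsupp.single i 1 - Finsupp.single i 1 = d := by
        ext j
        rw [Finsupp.tsub_apply, Finsupp.add_apply]
        omega
      have h2 : (d + Finsupp.single i 1 : Idx →₀ ℕ) i = d i + 1 := by
        rw [Finsupp.add_apply, Finsupp.single_apply, if_pos rfl]
      rw [if_pos h1, if_pos rfl, h2]
      push_cast; ring
    · rw [if_neg hs, mul_zero]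
      by_cases hsi : s i = 0
      · simp [hsi]
      · rw [if_neg]
        intro h
        apply hs
        ext j
        have hj := DFunLike.congr_fun h j
        rw [Finsupp.tsub_apply] at hj
        rw [Finsupp.add_apply]
        rcases eq_or_ne i j with rfl | hij
        · rw [Finsupp.single_apply, if_pos rfl] at hj ⊢
          omega
        · rw [Finsupp.single_apply, if_neg hij] at hj ⊢
          omega

lemma BF_X_mul (i : Idx) (P Q : Pol) : BF (X i * P) Q = BF P (pderiv i Q) := by
  induction P using MvPolynomial.induction_on' with
  | add p q hp hq => rw [mul_add, BF_add_left, BF_add_left, hp, hq]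
  | monomial d a =>
    have hX : (X i : Pol) * monomial d a = monomial (Finsupp.single i 1 + d) a := by
      rw [show (X i : Pol) = monomial (Finsupp.single i 1) 1 from rfl, monomial_mul, one_mul]
    rw [hX, BF_monomial_left, BF_monomial_left, coeff_pderiv, fac_single_add,
      add_comm (Finsupp.single i 1) d]
    ring

lemma BF_pderiv_left (i : Idx) (P Q : Pol) : BF (pderiv i P) Q = BF P (X i * Q) := by
  rw [BF_symm, ← BF_X_mul, BF_symm]


abbrev i01 : Idx := ⟨(0,1), by decide⟩
abbrev i02 : Idx := ⟨(0,2), by decide⟩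
abbrev i03 : Idx := ⟨(0,3), by decide⟩
abbrev i12 : Idx := ⟨(1,2), by decide⟩
abbrev i13 : Idx := ⟨(1,3), by decide⟩
abbrev i23 : Idx := ⟨(2,3), by decide⟩

lemma Lap_apply (P : Pol) :
    Lap P = (2:ℂ) • (pderiv i01 (pderiv i23 P) - pderiv i02 (pderiv i13 P)
      + pderiv i03 (pderiv i12 P)) := by
  have d01 : D 0 1 = (pderiv i01).toLinearMap := dif_pos (by decide)
  have d02 : D 0 2 = (pderiv i02).toLinearMap := dif_pos (by decide)
  have d03 : D 0 3 = (pderiv i03).toLinearMap := dif_pos (by decide)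
  have d12 : D 1 2 = (pderiv i12).toLinearMap := dif_pos (by decide)
  have d13 : D 1 3 = (pderiv i13).toLinearMap := dif_pos (by decide)
  have d23 : D 2 3 = (pderiv i23).toLinearMap := dif_pos (by decide)
  simp [Lap, d01, d02, d03, d12, d13, d23]

lemma r2_eq : r2 = (2:ℂ) • ((X i01 : Pol) * X i23 - X i02 * X i13 + X i03 * X i12) := by
  have z01 : Z 0 1 = X i01 := dif_pos (by decide)
  have z02 : Z 0 2 = X i02 := dif_pos (by decide)
  have z03 : Z 0 3 = X i03 := dif_pos (by decide)
  have z12 : Z 1 2 = X i12 := dif_pos (by decide)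
  have z13 : Z 1 3 = X i13 := dif_pos (by decide)
  have z23 : Z 2 3 = X i23 := dif_pos (by decide)
  rw [r2, z01, z02, z03, z12, z13, z23]

lemma BF_Lap (P Q : Pol) : BF (Lap P) Q = BF P (r2 * Q) := by
  rw [Lap_apply, r2_eq, smul_mul_assoc, BF_smul_left, BF_smul_right]
  congr 1
  rw [BF_add_left, BF_sub_left]
  rw [BF_pderiv_left, BF_pderiv_left, BF_pderiv_left, BF_pderiv_left, BF_pderiv_left,
    BF_pderiv_left]
  rw [show ((X i01 : Pol) * X i23 - X i02 * X i13 + X i03 * X i12) * Q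
      = (X i23 * (X i01 * Q)) - (X i13 * (X i02 * Q)) + (X i12 * (X i03 * Q)) by ring]
  rw [BF_add_right, BF_sub_right]

lemma degree_single (i : Idx) : (Finsupp.single i 1).degree = 1 := by
  exact Finsupp.degree_single i 1

lemma degree_add (a b : Idx →₀ ℕ) : (a + b).degree = a.degree + b.degree := by
  simp [Finsupp.degree_eq_weight_one, map_add]

lemma pderiv_isHomogeneous {P : Pol} {n : ℕ} (i : Idx) (h : P.IsHomogeneous (n + 1)) :
    (pderiv i P).IsHomogeneous n := by
  classical
  have hP : pderiv i P = ∑ d ∈ P.support, (monomial (d - Finsupp.single i 1))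
      ((coeff d P) * (d i : ℂ)) := by
    conv_lhs => rw [P.as_sum, map_sum]
    exact Finset.sum_congr rfl fun d _ => pderiv_monomial
  rw [hP]
  apply IsHomogeneous.sum
  intro d hd
  by_cases hdi : d i = 0
  · rw [hdi]; push_cast; rw [mul_zero, map_zero]; exact isHomogeneous_zero _ _ _
  · apply isHomogeneous_monomial
    have hdeg : d.degree = n + 1 := by
      by_contra hne
      exact (mem_support_iff.mp hd) (h.coeff_eq_zero hne)
    have hrec : (d - Finsupp.single i 1) + Finsupp.single i 1 = d := by
      ext j
      rw [Finsupp.add_apply, Finsupp.tsub_apply, Finsupp.single_apply]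
      rcases eq_or_ne i j with rfl | hij
      · rw [if_pos rfl]; omega
      · rw [if_neg hij]; omega
    have := degree_add (d - Finsupp.single i 1) (Finsupp.single i 1)
    rw [hrec, degree_single, hdeg] at this
    omega

lemma pderiv_eq_zero_of_isHomogeneous_zero {P : Pol} (i : Idx) (h : P.IsHomogeneous 0) :
    pderiv i P = 0 := by
  classical
  have hP : pderiv i P = ∑ d ∈ P.support, (monomial (d - Finsupp.single i 1))
      ((coeff d P) * (d i : ℂ)) := by
    conv_lhs => rw [P.as_sum, map_sum]
    exact Finset.sum_congr rfl fun d _ => pderiv_monomial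
  rw [hP]
  apply Finset.sum_eq_zero
  intro d hd
  have hdeg : d.degree = 0 := by
    by_contra hne
    exact (mem_support_iff.mp hd) (h.coeff_eq_zero hne)
  have : d i = 0 := by
    have := Finsupp.le_degree i d
    omega
  rw [this]; push_cast; rw [mul_zero, map_zero]

lemma Lap_mem {n : ℕ} {P : Pol} (h : P.IsHomogeneous (n + 2)) : (Lap P).IsHomogeneous n := by
  rw [Lap_apply]
  have h2 : ∀ i j : Idx, (pderiv i (pderiv j P)).IsHomogeneous n := fun i j =>
    pderiv_isHomogeneous i (pderiv_isHomogeneous j h)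
  rw [← mem_homogeneousSubmodule] at *
  exact Submodule.smul_mem _ _ (Submodule.add_mem _ (Submodule.sub_mem _ (h2 _ _) (h2 _ _)) (h2 _ _))

lemma Lap_eq_zero_of_le_one {m : ℕ} (hm : m ≤ 1) {P : Pol} (h : P.IsHomogeneous m) :
    Lap P = 0 := by
  rw [Lap_apply]
  interval_cases m
  · rw [pderiv_eq_zero_of_isHomogeneous_zero i23 h, pderiv_eq_zero_of_isHomogeneous_zero i13 h,
      pderiv_eq_zero_of_isHomogeneous_zero i12 h]
    simp
  · rw [pderiv_eq_zero_of_isHomogeneous_zero i01 (pderiv_isHomogeneous i23 h),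
      pderiv_eq_zero_of_isHomogeneous_zero i02 (pderiv_isHomogeneous i13 h),
      pderiv_eq_zero_of_isHomogeneous_zero i03 (pderiv_isHomogeneous i12 h)]
    simp

lemma r2_isHomogeneous : r2.IsHomogeneous 2 := by
  rw [r2_eq, ← mem_homogeneousSubmodule]
  have hX : ∀ i j : Idx, ((X i : Pol) * X j) ∈ homogeneousSubmodule Idx ℂ 2 :=
    fun i j => (isHomogeneous_X ℂ i).mul (isHomogeneous_X ℂ j)
  exact Submodule.smul_mem _ _ (Submodule.add_mem _ (Submodule.sub_mem _ (hX _ _) (hX _ _)) (hX _ _))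

lemma r2_ne_zero : r2 ≠ 0 := by
  classical
  intro h
  set f : Idx → ℂ := fun i => if i = i01 ∨ i = i23 then (1:ℂ) else 0 with hf
  have := congrArg (eval f) h
  rw [r2_eq] at this
  simp only [smul_eq_C_mul, map_mul, map_add, map_sub, eval_C, eval_X, map_zero] at this
  have f01 : f i01 = 1 := if_pos (Or.inl rfl)
  have f23 : f i23 = 1 := if_pos (Or.inr rfl)
  have f02 : f i02 = 0 := if_neg (by decide)
  have f13 : f i13 = 0 := if_neg (by decide)
  have f03 : f i03 = 0 := if_neg (by decide)
  have f12 : f i12 = 0 := if_neg (by decide)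
  rw [f01, f23, f02, f13, f03, f12] at this
  norm_num at this

noncomputable instance degSetFintype (m : ℕ) :
    Fintype ↥{d : Idx →₀ ℕ | d.degree = m} :=
  Set.Finite.fintype ((Finsupp.finite_of_degree_le m).subset (fun _ hd => le_of_eq hd))

noncomputable def homEquiv (m : ℕ) :
    ↥(homogeneousSubmodule Idx ℂ m) ≃ₗ[ℂ] (↥{d : Idx →₀ ℕ | d.degree = m} →₀ ℂ) :=
  (LinearEquiv.ofEq _ _ (homogeneousSubmodule_eq_finsupp_supported Idx ℂ m)).trans
    (AddMonoidAlgebra.supportedEquivFinsupp _)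

instance (m : ℕ) : FiniteDimensional ℂ ↥(homogeneousSubmodule Idx ℂ m) :=
  Module.Finite.equiv (homEquiv m).symm

lemma card_degSet (m : ℕ) :
    Fintype.card ↥{d : Idx →₀ ℕ | d.degree = m} = (m+5).choose 5 := by
  classical
  have e1 : ↥{d : Idx →₀ ℕ | d.degree = m} ≃ {P : Idx →₀ ℕ // P.sum (fun _ => id) = m} :=
    Equiv.subtypeEquivRight (fun d => Iff.rfl)
  rw [Fintype.card_congr (e1.trans (Sym.equivNatSum Idx m).symm), Sym.card_sym_eq_choose,
    show Fintype.card Idx = 6 from by decide, show 6 + m - 1 = m + 5 by omega,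
    ← Nat.choose_symm (Nat.le_add_right m 5), show m + 5 - m = 5 by omega]

lemma finrank_hom (m : ℕ) :
    Module.finrank ℂ ↥(homogeneousSubmodule Idx ℂ m) = (m+5).choose 5 := by
  rw [(homEquiv m).finrank_eq, Module.finrank_finsupp_self, card_degSet]

lemma eq_zero_of_BF (m : ℕ) {Q : Pol} (hQ : Q.IsHomogeneous m)
    (h : ∀ d : Idx →₀ ℕ, d.degree = m → BF (monomial d 1) Q = 0) : Q = 0 := by
  apply MvPolynomial.ext
  intro d
  rw [coeff_zero]
  by_cases hd : d.degree = m
  · have h2 := h d hd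
    rw [BF_monomial_left, mul_one] at h2
    exact (mul_eq_zero.mp h2).resolve_left (fac_ne_zero d)
  · exact hQ.coeff_eq_zero hd

noncomputable def BL : LinearMap.BilinForm ℂ Pol :=
  LinearMap.mk₂ ℂ BF BF_add_left (fun c P Q => by rw [BF_smul_left, smul_eq_mul])
    BF_add_right (fun c P Q => by rw [BF_smul_right, smul_eq_mul])

noncomputable def Bm (m : ℕ) : LinearMap.BilinForm ℂ ↥(homogeneousSubmodule Idx ℂ m) :=
  BL.restrict (homogeneousSubmodule Idx ℂ m)

lemma Bm_apply (m : ℕ) (x y : ↥(homogeneousSubmodule Idx ℂ m)) :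
    Bm m x y = BF ↑x ↑y := rfl

lemma Bm_refl (m : ℕ) : (Bm m).IsRefl := by
  intro x y h
  rw [Bm_apply, BF_symm] at h
  exact h

lemma Bm_nondeg (m : ℕ) : (Bm m).Nondegenerate := by
  refine (LinearMap.IsRefl.nondegenerate_iff_separatingLeft (Bm_refl m)).mpr ?_
  intro x hx
  rw [← Submodule.coe_eq_zero]
  apply eq_zero_of_BF m x.2
  intro d hd
  have hm : (monomial d (1:ℂ)) ∈ homogeneousSubmodule Idx ℂ m := isHomogeneous_monomial 1 hd
  have := hx ⟨monomial d 1, hm⟩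
  rw [Bm_apply, BF_symm] at this
  exact this

noncomputable def LapR (k : ℕ) :
    ↥(homogeneousSubmodule Idx ℂ (k+2)) →ₗ[ℂ] ↥(homogeneousSubmodule Idx ℂ k) :=
  Lap.restrict (fun _ hP => Lap_mem hP)

lemma LapR_coe (k : ℕ) (x : ↥(homogeneousSubmodule Idx ℂ (k+2))) :
    (↑(LapR k x) : Pol) = Lap ↑x := rfl

lemma LapR_surj (k : ℕ) : LinearMap.range (LapR k) = ⊤ := by
  set W := LinearMap.range (LapR k) with hW
  have horth : (Bm k).orthogonal W = ⊥ := by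
    rw [Submodule.eq_bot_iff]
    intro x hx
    have key : ∀ P : ↥(homogeneousSubmodule Idx ℂ (k+2)), BF (Lap ↑P) ↑x = 0 := by
      intro P
      have h0 := hx (LapR k P) (LinearMap.mem_range_self _ P)
      rw [Bm_apply, LapR_coe] at h0
      exact h0
    have hxh : (↑x : Pol).IsHomogeneous k := x.2
    have hh : (r2 * (↑x:Pol)).IsHomogeneous (k+2) := by
      have := r2_isHomogeneous.mul hxh
      rwa [add_comm 2 k] at this
    have hr2x : r2 * (↑x : Pol) = 0 := by
      apply eq_zero_of_BF (k+2) hh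
      intro d hd
      have hm : (monomial d (1:ℂ)) ∈ homogeneousSubmodule Idx ℂ (k+2) :=
        isHomogeneous_monomial 1 hd
      have h3 := key ⟨monomial d 1, hm⟩
      rwa [BF_Lap] at h3
    have hx0 : (↑x : Pol) = 0 := by
      rcases mul_eq_zero.mp hr2x with h | h
      · exact absurd h r2_ne_zero
      · exact h
    exact Submodule.coe_eq_zero.mp hx0
  have hfr := LinearMap.BilinForm.finrank_orthogonal (Bm_nondeg k) W
  rw [horth, finrank_bot] at hfr
  apply Submodule.eq_top_of_finrank_eq
  have hle := Submodule.finrank_le W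
  omega

set_option synthInstance.maxHeartbeats 1000000 in
lemma finrank_Hm_add_two (k : ℕ) :
    Module.finrank ℂ ↥(Hm (k+2)) = (k+7).choose 5 - (k+5).choose 5 := by
  have hker : LinearMap.ker (LapR k)
      = Submodule.comap (homogeneousSubmodule Idx ℂ (k+2)).subtype (Hm (k+2)) := by
    ext x
    simp only [LinearMap.mem_ker, Submodule.mem_comap, Hm, Submodule.mem_inf,
      Submodule.coe_subtype, LinearMap.mem_ker]
    constructor
    · intro h
      refine ⟨x.2, ?_⟩
      rw [← LapR_coe, h, Submodule.coe_zero]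
    · intro h
      have : (↑(LapR k x) : Pol) = 0 := by rw [LapR_coe]; exact h.2
      exact Submodule.coe_eq_zero.mp this
  have h1 := LinearMap.finrank_range_add_finrank_ker (LapR k)
  rw [LapR_surj, finrank_top, finrank_hom, finrank_hom, show k+2+5 = k+7 by omega] at h1
  have h2 : Module.finrank ℂ ↥(LinearMap.ker (LapR k)) = Module.finrank ℂ ↥(Hm (k+2)) := by
    rw [hker]
    exact (Submodule.comapSubtypeEquivOfLe
      (inf_le_left : Hm (k+2) ≤ homogeneousSubmodule Idx ℂ (k+2))).finrank_eq
  omega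

lemma choose_formula (k : ℕ) :
    (k+7).choose 5 * 120 = (k+3)*(k+4)*(k+5)*(k+6)*(k+7) := by
  have h := Nat.choose_mul_factorial_mul_factorial (show 5 ≤ k+7 by omega)
  rw [show (k+7) - 5 = k+2 by omega, show (5:ℕ).factorial = 120 from rfl] at h
  have hf : (k+7).factorial = (k+3)*(k+4)*(k+5)*(k+6)*(k+7) * (k+2).factorial := by
    rw [show k+7 = (k+6)+1 from rfl, show k+6 = (k+5)+1 from rfl, show k+5 = (k+4)+1 from rfl,
      show k+4 = (k+3)+1 from rfl, show k+3 = (k+2)+1 from rfl]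
    simp [Nat.factorial_succ]
    ring
  rw [hf] at h
  apply Nat.eq_of_mul_eq_mul_right (Nat.factorial_pos (k+2))
  calc (k+7).choose 5 * 120 * (k+2).factorial
      = (k+7).choose 5 * 120 * (k+2).factorial := rfl
    _ = (k+3)*(k+4)*(k+5)*(k+6)*(k+7) * (k+2).factorial := h

lemma choose_arith (k : ℕ) :
    (k+7).choose 5 - (k+5).choose 5 = (k+3)*(k+4)^2*(k+5)/12 := by
  have h1 := choose_formula k
  have h2 : (k+5).choose 5 * 120 = (k+1)*(k+2)*(k+3)*(k+4)*(k+5) := by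
    have h := Nat.choose_mul_factorial_mul_factorial (show 5 ≤ k+5 by omega)
    rw [show (k+5) - 5 = k by omega, show (5:ℕ).factorial = 120 from rfl] at h
    have hf : (k+5).factorial = (k+1)*(k+2)*(k+3)*(k+4)*(k+5) * k.factorial := by
      rw [show k+5 = (k+4)+1 from rfl, show k+4 = (k+3)+1 from rfl, show k+3 = (k+2)+1 from rfl,
        show k+2 = (k+1)+1 from rfl, show k+1 = k+1 from rfl]
      simp [Nat.factorial_succ]
      ring
    rw [hf] at h
    exact Nat.eq_of_mul_eq_mul_right (Nat.factorial_pos k) h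
  have hle : (k+5).choose 5 ≤ (k+7).choose 5 := Nat.choose_le_choose 5 (by omega)
  have key : ((k+7).choose 5 - (k+5).choose 5) * 12 = (k+3)*(k+4)^2*(k+5) := by
    zify [hle]
    have h1' : ((k+7).choose 5 : ℤ) * 120 = (k+3)*(k+4)*(k+5)*(k+6)*(k+7) := by exact_mod_cast h1
    have h2' : ((k+5).choose 5 : ℤ) * 120 = (k+1)*(k+2)*(k+3)*(k+4)*(k+5) := by exact_mod_cast h2
    have key10 : (((k+7).choose 5 : ℤ) - (k+5).choose 5) * 120
        = 10 * ((k+3)*(k+4)^2*(k+5)) := by linear_combination h1' - h2'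
    linarith [key10]
  generalize hq : (k+3)*(k+4)^2*(k+5) = q at key ⊢
  omega


end HmAux


/-- `dim H_m = (m+1)(m+2)²(m+3)/12`. -/
theorem finrank_Hm (m : ℕ) :
    Module.finrank ℂ (Hm m) = (m + 1) * (m + 2) ^ 2 * (m + 3) / 12 := by
  match m with
  | 0 =>
    have hEq : Hm 0 = homogeneousSubmodule Idx ℂ 0 := by
      refine le_antisymm inf_le_left (le_inf le_rfl ?_)
      intro P hP
      rw [LinearMap.mem_ker]
      exact HmAux.Lap_eq_zero_of_le_one (by omega) hP
    rw [hEq, HmAux.finrank_hom]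
    decide
  | 1 =>
    have hEq : Hm 1 = homogeneousSubmodule Idx ℂ 1 := by
      refine le_antisymm inf_le_left (le_inf le_rfl ?_)
      intro P hP
      rw [LinearMap.mem_ker]
      exact HmAux.Lap_eq_zero_of_le_one le_rfl hP
    rw [hEq, HmAux.finrank_hom]
    decide
  | (k+2) =>
    rw [HmAux.finrank_Hm_add_two, HmAux.choose_arith]
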